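/- arXiv:math/9907008 — 3 statements merged into one kernel-verified Lean document; each statement's English description precedes it below -/
import Mathlib

section
/- Let R be the two-sided ideal of T generated by the three matrices E₁₂, β·E₂₂ and E₂₃. For every integer n ≥ 1, the n-th power Rⁿ equals the set of all matrices in T whose (1,1)-, (3,3)- and below-diagonal entries are 0, whose (1,2)-entry lies in (β^{n−1}), whose (1,3)-entry lies in (β^{max(0,n−2)}), whose (2,2)-entry lies in (β^n), and whose (2,3)-entry lies in (β^{n−1}). -/
open Polynomial Matrix

noncomputable section

/-- `Algebra` structure on the quotient of a `k`-algebra by a ring congruence. -/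
instance RingConQuotient.algebra (k R : Type*) [CommSemiring k] [Ring R] [Algebra k R]
    (c : RingCon R) : Algebra k c.Quotient where
  algebraMap := (RingCon.mk' c).comp (algebraMap k R)
  commutes' := by
    intro r x
    induction x using Quotient.ind
    exact congrArg _ (Algebra.commutes r _)
  smul_def' := by
    intro r x
    induction x using Quotient.ind
    exact congrArg _ (Algebra.smul_def r _)

variable (k : Type*) [Field k]

/-- `D` is a `k`-derivation (as a linear endomorphism of a `k`-algebra). -/
def IsDer {R : Type*} [Ring R] [Algebra k R] (D : R →ₗ[k] R) : Prop :=
  ∀ x y : R, D (x * y) = D x * y + x * D y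

/-- `D` is an inner derivation. -/
def IsInner {R : Type*} [Ring R] [Algebra k R] (D : R →ₗ[k] R) : Prop :=
  ∃ a : R, ∀ x : R, D x = a * x - x * a

/-- The ideal `(β^j)` of `k[β]`, as a `k`-submodule. -/
def Bsub (j : ℕ) : Submodule k (Polynomial k) where
  carrier := {p | X ^ j ∣ p}
  zero_mem' := dvd_zero _
  add_mem' := fun h1 h2 => dvd_add h1 h2
  smul_mem' := fun c p hp => by
    simpa [Polynomial.smul_eq_C_mul] using Dvd.dvd.mul_left hp (C c)

lemma mem_Bsub {k : Type*} [Field k] {j : ℕ} {p : Polynomial k} :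
    p ∈ Bsub k j ↔ X ^ j ∣ p := Iff.rfl

/-- The algebra `T`: upper triangular 3×3 matrices over `k[β]` whose
`(1,1)` and `(3,3)` entries are constants. -/
def Tsub : Subalgebra k (Matrix (Fin 3) (Fin 3) (Polynomial k)) where
  carrier := {M | (∀ i j : Fin 3, j < i → M i j = 0) ∧
      (∃ x : k, M 0 0 = C x) ∧ (∃ z : k, M 2 2 = C z)}
  zero_mem' := ⟨fun _ _ _ => rfl, ⟨0, by simp⟩, ⟨0, by simp⟩⟩
  one_mem' := ⟨fun i j h => Matrix.one_apply_ne h.ne', ⟨1, by simp⟩, ⟨1, by simp⟩⟩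
  add_mem' := by
    rintro a b ⟨hal, ⟨x, hax⟩, ⟨z, haz⟩⟩ ⟨hbl, ⟨y, hby⟩, ⟨w, hbw⟩⟩
    refine ⟨fun i j h => by simp [hal i j h, hbl i j h], ⟨x + y, by simp [hax, hby]⟩,
      ⟨z + w, by simp [haz, hbw]⟩⟩
  mul_mem' := by
    rintro a b ⟨hal, ⟨x, hax⟩, ⟨z, haz⟩⟩ ⟨hbl, ⟨y, hby⟩, ⟨w, hbw⟩⟩
    refine ⟨fun i j h => ?_, ⟨x * y, ?_⟩, ⟨z * w, ?_⟩⟩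
    · rw [Matrix.mul_apply]
      apply Finset.sum_eq_zero
      intro l _
      rcases lt_or_ge l i with hl | hl
      · rw [hal i l hl, zero_mul]
      · rw [hbl l j (lt_of_lt_of_le h hl), mul_zero]
    · rw [Matrix.mul_apply, Fin.sum_univ_three,
        hbl 1 0 (by decide), hbl 2 0 (by decide), hax, hby]
      simp
    · rw [Matrix.mul_apply, Fin.sum_univ_three,
        hal 2 0 (by decide), hal 2 1 (by decide), haz, hbw]
      simp
  algebraMap_mem' := by
    intro r
    refine ⟨fun i j h => ?_, ⟨r, ?_⟩, ⟨r, ?_⟩⟩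
    · rw [Matrix.algebraMap_matrix_apply, if_neg h.ne']
    · rw [Matrix.algebraMap_matrix_apply, if_pos rfl]; rfl
    · rw [Matrix.algebraMap_matrix_apply, if_pos rfl]; rfl

/-- The matrix `p·E₁₂` as an element of `T`. -/
def tE12 (p : Polynomial k) : Tsub k :=
  ⟨Matrix.single 0 1 p, by
    refine ⟨fun i j h => ?_, ⟨0, ?_⟩, ⟨0, ?_⟩⟩
    · fin_cases i <;> fin_cases j <;> simp_all [Matrix.single, Matrix.of_apply]
    · simp [Matrix.single, Matrix.of_apply]
    · simp [Matrix.single, Matrix.of_apply]⟩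

/-- The matrix `p·E₂₂` as an element of `T`. -/
def tE22 (p : Polynomial k) : Tsub k :=
  ⟨Matrix.single 1 1 p, by
    refine ⟨fun i j h => ?_, ⟨0, ?_⟩, ⟨0, ?_⟩⟩
    · fin_cases i <;> fin_cases j <;> simp_all [Matrix.single, Matrix.of_apply]
    · simp [Matrix.single, Matrix.of_apply]
    · simp [Matrix.single, Matrix.of_apply]⟩

/-- The matrix `p·E₂₃` as an element of `T`. -/
def tE23 (p : Polynomial k) : Tsub k :=
  ⟨Matrix.single 1 2 p, by
    refine ⟨fun i j h => ?_, ⟨0, ?_⟩, ⟨0, ?_⟩⟩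
    · fin_cases i <;> fin_cases j <;> simp_all [Matrix.single, Matrix.of_apply]
    · simp [Matrix.single, Matrix.of_apply]
    · simp [Matrix.single, Matrix.of_apply]⟩

/-- The matrix `p·E₁₃` as an element of `T`. -/
def tE13 (p : Polynomial k) : Tsub k :=
  ⟨Matrix.single 0 2 p, by
    refine ⟨fun i j h => ?_, ⟨0, ?_⟩, ⟨0, ?_⟩⟩
    · fin_cases i <;> fin_cases j <;> simp_all [Matrix.single, Matrix.of_apply]
    · simp [Matrix.single, Matrix.of_apply]
    · simp [Matrix.single, Matrix.of_apply]⟩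

/-- The idempotent `E₁₁` as an element of `T`. -/
def tE11 : Tsub k :=
  ⟨Matrix.single 0 0 1, by
    refine ⟨fun i j h => ?_, ⟨1, ?_⟩, ⟨0, ?_⟩⟩
    · fin_cases i <;> fin_cases j <;> simp_all [Matrix.single, Matrix.of_apply]
    · simp [Matrix.single, Matrix.of_apply]
    · simp [Matrix.single, Matrix.of_apply]⟩

/-- The idempotent `E₂₂` as an element of `T`. -/
def tE22one : Tsub k := tE22 k 1

/-- The idempotent `E₃₃` as an element of `T`. -/
def tE33 : Tsub k :=
  ⟨Matrix.single 2 2 1, by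
    refine ⟨fun i j h => ?_, ⟨0, ?_⟩, ⟨1, ?_⟩⟩
    · fin_cases i <;> fin_cases j <;> simp_all [Matrix.single, Matrix.of_apply]
    · simp [Matrix.single, Matrix.of_apply]
    · simp [Matrix.single, Matrix.of_apply]⟩

/-- The underlying set of the ideal `I(n; n', n''; V)` of `T`. -/
def Icar (n n' n'' : ℕ) (V : Submodule k (Polynomial k)) : Set (Tsub k) :=
  {M | (M : Matrix (Fin 3) (Fin 3) (Polynomial k)) 0 0 = 0 ∧
       (M : Matrix (Fin 3) (Fin 3) (Polynomial k)) 2 2 = 0 ∧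
       X ^ n' ∣ (M : Matrix (Fin 3) (Fin 3) (Polynomial k)) 0 1 ∧
       (M : Matrix (Fin 3) (Fin 3) (Polynomial k)) 0 2 ∈ V ∧
       X ^ n ∣ (M : Matrix (Fin 3) (Fin 3) (Polynomial k)) 1 1 ∧
       X ^ n'' ∣ (M : Matrix (Fin 3) (Fin 3) (Polynomial k)) 1 2}

variable {k}

lemma Tsub_lower {a : Tsub k} :
    ∀ i j : Fin 3, j < i → (a : Matrix (Fin 3) (Fin 3) (Polynomial k)) i j = 0 := a.2.1

lemma Tsub_00 (a : Tsub k) : ∃ x : k, (a : Matrix (Fin 3) (Fin 3) (Polynomial k)) 0 0 = C x :=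
  a.2.2.1

lemma Tsub_22 (a : Tsub k) : ∃ z : k, (a : Matrix (Fin 3) (Fin 3) (Polynomial k)) 2 2 = C z :=
  a.2.2.2

variable (k)

/-- The two-sided ideal `I(n; n', n''; V)` of `T`. -/
def Itsi (n n' n'' : ℕ) (V : Submodule k (Polynomial k)) (hn' : n' ≤ n) (hn'' : n'' ≤ n)
    (hV : ∀ p : Polynomial k, X ^ min n' n'' ∣ p → p ∈ V) : TwoSidedIdeal (Tsub k) :=
  TwoSidedIdeal.mk' (Icar k n n' n'' V)
    (by
      refine ⟨rfl, rfl, ?_, ?_, ?_, ?_⟩ <;> simp)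
    (by
      rintro a b ⟨h1, h2, h3, h4, h5, h6⟩ ⟨g1, g2, g3, g4, g5, g6⟩
      refine ⟨?_, ?_, ?_, ?_, ?_, ?_⟩ <;>
        simp only [AddMemClass.coe_add, Matrix.add_apply]
      · rw [h1, g1, add_zero]
      · rw [h2, g2, add_zero]
      · exact dvd_add h3 g3
      · exact V.add_mem h4 g4
      · exact dvd_add h5 g5
      · exact dvd_add h6 g6)
    (by
      rintro a ⟨h1, h2, h3, h4, h5, h6⟩
      refine ⟨?_, ?_, ?_, ?_, ?_, ?_⟩ <;>
        simp only [NegMemClass.coe_neg, Matrix.neg_apply]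
      · rw [h1, neg_zero]
      · rw [h2, neg_zero]
      · exact dvd_neg.mpr h3
      · exact V.neg_mem h4
      · exact dvd_neg.mpr h5
      · exact dvd_neg.mpr h6)
    (by
      rintro t a ⟨h1, h2, h3, h4, h5, h6⟩
      have hta : ((t * a : Tsub k) : Matrix (Fin 3) (Fin 3) (Polynomial k)) =
          (t : Matrix (Fin 3) (Fin 3) (Polynomial k)) * a := rfl
      obtain ⟨x, hx⟩ := Tsub_00 t
      refine ⟨?_, ?_, ?_, ?_, ?_, ?_⟩ <;>
        rw [hta, Matrix.mul_apply, Fin.sum_univ_three]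
      · rw [h1, Tsub_lower (a := a) 1 0 (by decide), Tsub_lower (a := a) 2 0 (by decide)]
        simp
      · rw [h2, Tsub_lower (a := t) 2 0 (by decide), Tsub_lower (a := t) 2 1 (by decide)]
        simp
      · rw [Tsub_lower (a := a) 2 1 (by decide)]
        simp only [mul_zero, add_zero]
        exact dvd_add (Dvd.dvd.mul_left h3 _)
          (Dvd.dvd.mul_left ((pow_dvd_pow X hn').trans h5) _)
      · rw [h2]
        simp only [mul_zero, add_zero]
        refine V.add_mem ?_
          (hV _ (Dvd.dvd.mul_left ((pow_dvd_pow X (min_le_right n' n'')).trans h6) _))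
        rw [hx]
        have : C x * (a : Matrix (Fin 3) (Fin 3) (Polynomial k)) 0 2 =
            x • (a : Matrix (Fin 3) (Fin 3) (Polynomial k)) 0 2 := by
          rw [Polynomial.smul_eq_C_mul]
        rw [this]
        exact V.smul_mem _ h4
      · rw [Tsub_lower (a := t) 1 0 (by decide), Tsub_lower (a := a) 2 1 (by decide)]
        simp only [zero_mul, mul_zero, zero_add, add_zero]
        exact Dvd.dvd.mul_left h5 _
      · rw [Tsub_lower (a := t) 1 0 (by decide), h2]
        simp only [zero_mul, mul_zero, zero_add, add_zero]
        exact Dvd.dvd.mul_left h6 _)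
    (by
      rintro a t ⟨h1, h2, h3, h4, h5, h6⟩
      have hta : ((a * t : Tsub k) : Matrix (Fin 3) (Fin 3) (Polynomial k)) =
          (a : Matrix (Fin 3) (Fin 3) (Polynomial k)) * t := rfl
      obtain ⟨z, hz⟩ := Tsub_22 t
      refine ⟨?_, ?_, ?_, ?_, ?_, ?_⟩ <;>
        rw [hta, Matrix.mul_apply, Fin.sum_univ_three]
      · rw [h1, Tsub_lower (a := t) 1 0 (by decide), Tsub_lower (a := t) 2 0 (by decide)]
        simp
      · rw [h2, Tsub_lower (a := a) 2 0 (by decide), Tsub_lower (a := a) 2 1 (by decide)]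
        simp
      · rw [h1, Tsub_lower (a := t) 2 1 (by decide)]
        simp only [zero_mul, mul_zero, zero_add, add_zero]
        exact Dvd.dvd.mul_right h3 _
      · rw [h1]
        simp only [zero_mul, zero_add]
        refine V.add_mem
          (hV _ (Dvd.dvd.mul_right ((pow_dvd_pow X (min_le_left n' n'')).trans h3) _)) ?_
        rw [hz]
        have : (a : Matrix (Fin 3) (Fin 3) (Polynomial k)) 0 2 * C z =
            z • (a : Matrix (Fin 3) (Fin 3) (Polynomial k)) 0 2 := by
          rw [Polynomial.smul_eq_C_mul, mul_comm]
        rw [this]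
        exact V.smul_mem _ h4
      · rw [Tsub_lower (a := a) 1 0 (by decide), Tsub_lower (a := t) 2 1 (by decide)]
        simp only [zero_mul, mul_zero, zero_add, add_zero]
        exact Dvd.dvd.mul_right h5 _
      · rw [Tsub_lower (a := a) 1 0 (by decide)]
        simp only [zero_mul, zero_add]
        exact dvd_add (Dvd.dvd.mul_right ((pow_dvd_pow X hn'').trans h5) _)
          (Dvd.dvd.mul_right h6 _))

/-- The quotient algebra `A = T / I(n; n', n''; V)`. -/
def Aquot (n n' n'' : ℕ) (V : Submodule k (Polynomial k)) (hn' : n' ≤ n) (hn'' : n'' ≤ n)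
    (hV : ∀ p : Polynomial k, X ^ min n' n'' ∣ p → p ∈ V) : Type _ :=
  (Itsi k n n' n'' V hn' hn'' hV).ringCon.Quotient

instance (n n' n'' : ℕ) (V : Submodule k (Polynomial k)) (hn' : n' ≤ n) (hn'' : n'' ≤ n)
    (hV : ∀ p : Polynomial k, X ^ min n' n'' ∣ p → p ∈ V) :
    Ring (Aquot k n n' n'' V hn' hn'' hV) :=
  inferInstanceAs (Ring (Itsi k n n' n'' V hn' hn'' hV).ringCon.Quotient)

instance (n n' n'' : ℕ) (V : Submodule k (Polynomial k)) (hn' : n' ≤ n) (hn'' : n'' ≤ n)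
    (hV : ∀ p : Polynomial k, X ^ min n' n'' ∣ p → p ∈ V) :
    Algebra k (Aquot k n n' n'' V hn' hn'' hV) :=
  inferInstanceAs (Algebra k (Itsi k n n' n'' V hn' hn'' hV).ringCon.Quotient)

/-- The quotient map `T → A`. -/
def Amk (n n' n'' : ℕ) (V : Submodule k (Polynomial k)) (hn' : n' ≤ n) (hn'' : n'' ≤ n)
    (hV : ∀ p : Polynomial k, X ^ min n' n'' ∣ p → p ∈ V) :
    Tsub k →+* Aquot k n n' n'' V hn' hn'' hV :=
  RingCon.mk' (Itsi k n n' n'' V hn' hn'' hV).ringCon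


/-- Powers of a two-sided ideal of `T`: `J⁰ = ⊤` and `J^{n+1} = span (Jⁿ · J)`. -/
def tIdealPow (J : TwoSidedIdeal (Tsub k)) : ℕ → TwoSidedIdeal (Tsub k)
  | 0 => ⊤
  | n + 1 => TwoSidedIdeal.span {z : Tsub k | ∃ x ∈ tIdealPow J n, ∃ y ∈ J, z = x * y}

section Aux

variable {k}

lemma tE12_mul_tE22 (p q : Polynomial k) : tE12 k p * tE22 k q = tE12 k (p * q) :=
  Subtype.ext (Matrix.single_mul_single_same (i := 0) (j := 1) (c := p) 1 q)

lemma tE22_mul_tE22 (p q : Polynomial k) : tE22 k p * tE22 k q = tE22 k (p * q) :=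
  Subtype.ext (Matrix.single_mul_single_same (i := 1) (j := 1) (c := p) 1 q)

lemma tE22_mul_tE23 (p q : Polynomial k) : tE22 k p * tE23 k q = tE23 k (p * q) :=
  Subtype.ext (Matrix.single_mul_single_same (i := 1) (j := 1) (c := p) 2 q)

lemma tE12_mul_tE23 (p q : Polynomial k) : tE12 k p * tE23 k q = tE13 k (p * q) :=
  Subtype.ext (Matrix.single_mul_single_same (i := 0) (j := 1) (c := p) 2 q)

lemma decomp (M : Tsub k) (h0 : (M : Matrix (Fin 3) (Fin 3) (Polynomial k)) 0 0 = 0)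
    (h2 : (M : Matrix (Fin 3) (Fin 3) (Polynomial k)) 2 2 = 0) :
    M = tE12 k ((M : Matrix (Fin 3) (Fin 3) (Polynomial k)) 0 1) +
        tE13 k ((M : Matrix (Fin 3) (Fin 3) (Polynomial k)) 0 2) +
        tE22 k ((M : Matrix (Fin 3) (Fin 3) (Polynomial k)) 1 1) +
        tE23 k ((M : Matrix (Fin 3) (Fin 3) (Polynomial k)) 1 2) := by
  have hl := Tsub_lower (a := M)
  apply Subtype.ext
  ext i j
  fin_cases i <;> fin_cases j <;>
    simp [tE12, tE13, tE22, tE23, Matrix.single, Matrix.add_apply, h0, h2,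
      hl 1 0 (by decide), hl 2 0 (by decide), hl 2 1 (by decide)]

/-- The ideal `I(n; n-1, n-1; (β^{n-2}))`. -/
def In (n : ℕ) : TwoSidedIdeal (Tsub k) :=
  Itsi k n (n - 1) (n - 1) (Bsub k (n - 2)) (Nat.sub_le n 1) (Nat.sub_le n 1)
    (fun p hp => mem_Bsub.mpr
      ((pow_dvd_pow X (by omega : n - 2 ≤ min (n - 1) (n - 1))).trans hp))

lemma mem_In {n : ℕ} {M : Tsub k} :
    M ∈ (In n : TwoSidedIdeal (Tsub k)) ↔
      ((M : Matrix (Fin 3) (Fin 3) (Polynomial k)) 0 0 = 0 ∧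
       (M : Matrix (Fin 3) (Fin 3) (Polynomial k)) 2 2 = 0 ∧
       X ^ (n - 1) ∣ (M : Matrix (Fin 3) (Fin 3) (Polynomial k)) 0 1 ∧
       X ^ (n - 2) ∣ (M : Matrix (Fin 3) (Fin 3) (Polynomial k)) 0 2 ∧
       X ^ n ∣ (M : Matrix (Fin 3) (Fin 3) (Polynomial k)) 1 1 ∧
       X ^ (n - 1) ∣ (M : Matrix (Fin 3) (Fin 3) (Polynomial k)) 1 2) := by
  unfold In Itsi
  exact (TwoSidedIdeal.mem_mk' _ _ _ _ _ _ M).trans Iff.rfl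

/-- The arrow ideal `R`. -/
def RR : TwoSidedIdeal (Tsub k) := TwoSidedIdeal.span {tE12 k 1, tE22 k X, tE23 k 1}

lemma gen12 : tE12 k 1 ∈ (RR : TwoSidedIdeal (Tsub k)) :=
  TwoSidedIdeal.subset_span (by simp)

lemma gen22 : tE22 k X ∈ (RR : TwoSidedIdeal (Tsub k)) :=
  TwoSidedIdeal.subset_span (by simp)

lemma gen23 : tE23 k 1 ∈ (RR : TwoSidedIdeal (Tsub k)) :=
  TwoSidedIdeal.subset_span (by simp)

lemma tE12_mem_RR (q : Polynomial k) : tE12 k q ∈ (RR : TwoSidedIdeal (Tsub k)) := by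
  have : tE12 k q = tE12 k 1 * tE22 k q := by rw [tE12_mul_tE22, one_mul]
  rw [this]
  exact TwoSidedIdeal.mul_mem_right _ _ _ gen12

lemma tE22X_mem_RR (q : Polynomial k) : tE22 k (X * q) ∈ (RR : TwoSidedIdeal (Tsub k)) := by
  rw [← tE22_mul_tE22]
  exact TwoSidedIdeal.mul_mem_right _ _ _ gen22

lemma tE23_mem_RR (q : Polynomial k) : tE23 k q ∈ (RR : TwoSidedIdeal (Tsub k)) := by
  have : tE23 k q = tE22 k q * tE23 k 1 := by rw [tE22_mul_tE23, mul_one]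
  rw [this]
  exact TwoSidedIdeal.mul_mem_left _ _ _ gen23

lemma tE13_mem_RR (q : Polynomial k) : tE13 k q ∈ (RR : TwoSidedIdeal (Tsub k)) := by
  have : tE13 k q = tE12 k 1 * tE23 k q := by rw [tE12_mul_tE23, one_mul]
  rw [this]
  exact TwoSidedIdeal.mul_mem_right _ _ _ gen12

lemma pow_succ_mem {n : ℕ} {x y : Tsub k} (hx : x ∈ tIdealPow k RR n)
    (hy : y ∈ (RR : TwoSidedIdeal (Tsub k))) : x * y ∈ tIdealPow k RR (n + 1) := by
  show x * y ∈ TwoSidedIdeal.span {z : Tsub k | ∃ x ∈ tIdealPow k RR n, ∃ y ∈ RR, z = x * y}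
  exact TwoSidedIdeal.subset_span ⟨x, hx, y, hy, rfl⟩

lemma RR_le_P1 {x : Tsub k} (hx : x ∈ (RR : TwoSidedIdeal (Tsub k))) :
    x ∈ tIdealPow k RR 1 := by
  rw [← one_mul x]
  exact pow_succ_mem (TwoSidedIdeal.mem_top (Tsub k) : (1 : Tsub k) ∈ tIdealPow k RR 0) hx

lemma mem_tE22_pow : ∀ n : ℕ, 1 ≤ n → ∀ q : Polynomial k,
    tE22 k (X ^ n * q) ∈ tIdealPow k RR n := by
  intro n
  induction n with
  | zero => omega
  | succ m ih =>
    intro _ q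
    rcases Nat.eq_zero_or_pos m with hm | hm
    · subst hm
      simpa [pow_one] using RR_le_P1 (tE22X_mem_RR q)
    · have h : X ^ (m + 1) * q = X ^ m * q * X := by ring
      rw [h, ← tE22_mul_tE22]
      exact pow_succ_mem (ih hm q) gen22

lemma mem_tE12_pow : ∀ n : ℕ, 1 ≤ n → ∀ q : Polynomial k,
    tE12 k (X ^ (n - 1) * q) ∈ tIdealPow k RR n := by
  intro n
  induction n with
  | zero => omega
  | succ m ih =>
    intro _ q
    rcases Nat.eq_zero_or_pos m with hm | hm
    · subst hm
      simpa using RR_le_P1 (tE12_mem_RR q)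
    · have e : m + 1 - 1 = m - 1 + 1 := by omega
      have h : X ^ (m + 1 - 1) * q = X ^ (m - 1) * q * X := by rw [e]; ring
      rw [h, ← tE12_mul_tE22]
      exact pow_succ_mem (ih hm q) gen22

lemma mem_tE23_pow : ∀ n : ℕ, 1 ≤ n → ∀ q : Polynomial k,
    tE23 k (X ^ (n - 1) * q) ∈ tIdealPow k RR n := by
  rintro (_ | m) hn q
  · omega
  rcases Nat.eq_zero_or_pos m with hm | hm
  · subst hm
    simpa using RR_le_P1 (tE23_mem_RR q)
  · have e : m + 1 - 1 = m := by omega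
    have h : X ^ (m + 1 - 1) * q = X ^ m * q * 1 := by rw [e, mul_one]
    rw [h, ← tE22_mul_tE23]
    exact pow_succ_mem (mem_tE22_pow m hm q) gen23

lemma mem_tE13_pow : ∀ n : ℕ, 1 ≤ n → ∀ q : Polynomial k,
    tE13 k (X ^ (n - 2) * q) ∈ tIdealPow k RR n := by
  rintro (_ | m) hn q
  · omega
  rcases Nat.eq_zero_or_pos m with hm | hm
  · subst hm
    simpa using RR_le_P1 (tE13_mem_RR q)
  · have e : m + 1 - 2 = m - 1 := by omega
    have h : X ^ (m + 1 - 2) * q = X ^ (m - 1) * q * 1 := by rw [e, mul_one]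
    rw [h, ← tE12_mul_tE23]
    exact pow_succ_mem (mem_tE12_pow m hm q) gen23

lemma RR_le_In1 {x : Tsub k} (hx : x ∈ (RR : TwoSidedIdeal (Tsub k))) :
    x ∈ (In 1 : TwoSidedIdeal (Tsub k)) := by
  refine TwoSidedIdeal.mem_span_iff.mp hx (In 1) ?_
  rintro y (rfl | rfl | rfl) <;>
    rw [SetLike.mem_coe, mem_In] <;>
    refine ⟨?_, ?_, ?_, ?_, ?_, ?_⟩ <;>
    simp [tE12, tE22, tE23, Matrix.single]

lemma mul_cond {m : ℕ} (hm : 1 ≤ m) {x y : Tsub k}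
    (hx : x ∈ (In m : TwoSidedIdeal (Tsub k))) (hy : y ∈ (In 1 : TwoSidedIdeal (Tsub k))) :
    x * y ∈ (In (m + 1) : TwoSidedIdeal (Tsub k)) := by
  rw [mem_In] at hx hy ⊢
  obtain ⟨hx0, hx2, hx01, hx02, hx11, hx12⟩ := hx
  obtain ⟨hy0, hy2, _, _, hy11, _⟩ := hy
  have hxl := Tsub_lower (a := x)
  have hyl := Tsub_lower (a := y)
  have hco : ((x * y : Tsub k) : Matrix (Fin 3) (Fin 3) (Polynomial k)) =
      (x : Matrix (Fin 3) (Fin 3) (Polynomial k)) * y := rfl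
  refine ⟨?_, ?_, ?_, ?_, ?_, ?_⟩ <;>
    rw [hco, Matrix.mul_apply, Fin.sum_univ_three]
  · rw [hx0, hyl 1 0 (by decide), hyl 2 0 (by decide)]; simp
  · rw [hx2, hxl 2 0 (by decide), hxl 2 1 (by decide)]; simp
  · rw [hx0, hyl 2 1 (by decide)]
    simp only [zero_mul, mul_zero, zero_add, add_zero]
    have : (X : Polynomial k) ^ (m + 1 - 1) = X ^ (m - 1) * X ^ 1 := by
      rw [← pow_add]; congr 1; omega
    rw [this]
    exact mul_dvd_mul hx01 (by simpa using hy11)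
  · rw [hx0, hy2]
    simp only [zero_mul, mul_zero, zero_add, add_zero]
    have : m + 1 - 2 = m - 1 := by omega
    rw [this]
    exact Dvd.dvd.mul_right hx01 _
  · rw [hxl 1 0 (by decide), hyl 2 1 (by decide)]
    simp only [zero_mul, mul_zero, zero_add, add_zero]
    have : (X : Polynomial k) ^ (m + 1) = X ^ m * X ^ 1 := by rw [← pow_add]
    rw [this]
    exact mul_dvd_mul hx11 (by simpa using hy11)
  · rw [hxl 1 0 (by decide), hy2]
    simp only [zero_mul, mul_zero, zero_add, add_zero]
    have : m + 1 - 1 = m := by omega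
    rw [this]
    exact Dvd.dvd.mul_right hx11 _

lemma P_le_In : ∀ n : ℕ, 1 ≤ n → ∀ M : Tsub k,
    M ∈ tIdealPow k RR n → M ∈ (In n : TwoSidedIdeal (Tsub k)) := by
  intro n
  induction n with
  | zero => omega
  | succ m ih =>
    intro _ M hM
    have hM' : M ∈ TwoSidedIdeal.span
        {z : Tsub k | ∃ x ∈ tIdealPow k RR m, ∃ y ∈ RR, z = x * y} := hM
    rcases Nat.eq_zero_or_pos m with hm | hm
    · subst hm
      refine TwoSidedIdeal.mem_span_iff.mp hM' (In 1) ?_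
      rintro z ⟨x, -, y, hy, rfl⟩
      exact TwoSidedIdeal.mul_mem_left _ _ _ (RR_le_In1 hy)
    · refine TwoSidedIdeal.mem_span_iff.mp hM' (In (m + 1)) ?_
      rintro z ⟨x, hx, y, hy, rfl⟩
      exact mul_cond hm (ih hm x hx) (RR_le_In1 hy)

end Aux

/-- description of the powers of the arrow ideal
`R = (E₁₂, β·E₂₂, E₂₃)` of `T`. -/
theorem stmt1 (n : ℕ) (hn : 1 ≤ n) (M : Tsub k) :
    M ∈ tIdealPow k (TwoSidedIdeal.span {tE12 k 1, tE22 k X, tE23 k 1}) n ↔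
      ((M : Matrix (Fin 3) (Fin 3) (Polynomial k)) 0 0 = 0 ∧
       (M : Matrix (Fin 3) (Fin 3) (Polynomial k)) 2 2 = 0 ∧
       (∀ i j : Fin 3, j < i → (M : Matrix (Fin 3) (Fin 3) (Polynomial k)) i j = 0) ∧
       X ^ (n - 1) ∣ (M : Matrix (Fin 3) (Fin 3) (Polynomial k)) 0 1 ∧
       X ^ (n - 2) ∣ (M : Matrix (Fin 3) (Fin 3) (Polynomial k)) 0 2 ∧
       X ^ n ∣ (M : Matrix (Fin 3) (Fin 3) (Polynomial k)) 1 1 ∧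
       X ^ (n - 1) ∣ (M : Matrix (Fin 3) (Fin 3) (Polynomial k)) 1 2) := by
  show M ∈ tIdealPow k RR n ↔ _
  constructor
  · intro hM
    have h := mem_In.mp (P_le_In n hn M hM)
    exact ⟨h.1, h.2.1, Tsub_lower, h.2.2.1, h.2.2.2.1, h.2.2.2.2.1, h.2.2.2.2.2⟩
  · rintro ⟨h00, h22, -, ⟨q1, hq1⟩, ⟨q2, hq2⟩, ⟨q3, hq3⟩, ⟨q4, hq4⟩⟩
    rw [decomp M h00 h22, hq1, hq2, hq3, hq4]
    exact add_mem (add_mem (add_mem (mem_tE12_pow n hn q1) (mem_tE13_pow n hn q2))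
      (mem_tE22_pow n hn q3)) (mem_tE23_pow n hn q4)

end
end

section
/- Let e₁ ≥ e₂ ≥ 1 be integers, V a k-subspace of k[β] with (β^{e₂}) ⊆ V, and e a positive integer dividing both e₁ and e₂. Define 𝒟_{V,e} = {(A,B) ∈ k[β]² : e·B(0) = 0 in k and A·v + B·v′ ∈ V for all v ∈ V} and J = {(A,B) ∈ k[β]² : A ∈ k + (β^{e₂}) and B ∈ (β^{e₁})}. Then 𝒟_{V,e} is a k-subspace of k[β]² closed under the bracket [(A₁,B₁),(A₂,B₂)] = (B₁A₂′ − B₂A₁′, B₁B₂′ − B₂B₁′), J is contained in 𝒟_{V,e}, and [(A₁,B₁),(A₂,B₂)] ∈ J whenever (A₁,B₁) ∈ 𝒟_{V,e} and (A₂,B₂) ∈ J. -/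
open Polynomial Matrix

noncomputable section

variable (k : Type*) [Field k]

variable {k}

variable (k)

/-- The space `𝒟_{V,e}` of first-order differential operators `A + B·∂/∂β`
(coded as pairs `(A,B)`) with `e·B(0) = 0` preserving `V`. -/
def Dset (V : Submodule k (Polynomial k)) (e : ℕ) : Set (Polynomial k × Polynomial k) :=
  {P | (e : k) * P.2.eval 0 = 0 ∧ ∀ v ∈ V, P.1 * v + P.2 * derivative v ∈ V}

/-- The space `J = (k ⊕ (β^{e₂})) ⊕ (β^{e₁})·∂/∂β`. -/
def Jset (e₁ e₂ : ℕ) : Set (Polynomial k × Polynomial k) :=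
  {P | (∃ c₀ : k, X ^ e₂ ∣ P.1 - C c₀) ∧ X ^ e₁ ∣ P.2}

/-- The commutator bracket of first-order differential operators. -/
def bracketOp (P Q : Polynomial k × Polynomial k) : Polynomial k × Polynomial k :=
  (P.2 * derivative Q.1 - Q.2 * derivative P.1, P.2 * derivative Q.2 - Q.2 * derivative P.2)

lemma aux_X_dvd {e n : ℕ} {B : Polynomial k} (h : (e : k) * B.eval 0 = 0)
    (hen : e ∣ n) : X ∣ C (n : k) * B := by
  obtain ⟨m, rfl⟩ := hen
  rw [X_dvd_iff, coeff_zero_eq_eval_zero]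
  push_cast
  simp only [eval_mul, eval_C]
  linear_combination (m : k) * h

lemma aux_pow_split {e₂ : ℕ} (h12 : 1 ≤ e₂) :
    (X : Polynomial k) ^ e₂ = X * X ^ (e₂ - 1) := by
  conv_lhs => rw [← Nat.sub_add_cancel h12]
  rw [pow_succ, mul_comm]

/-- `𝒟_{V,e}` is a Lie subalgebra of the first-order differential operators
containing `J` as a Lie ideal. -/
theorem stmt7 (e₁ e₂ e : ℕ) (h21 : e₂ ≤ e₁) (h12 : 1 ≤ e₂)
    (V : Submodule k (Polynomial k)) (hV : ∀ p : Polynomial k, X ^ e₂ ∣ p → p ∈ V)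
    (he : 0 < e) (hee₁ : e ∣ e₁) (hee₂ : e ∣ e₂) :
    (0 : Polynomial k × Polynomial k) ∈ Dset k V e ∧
    (∀ P Q, P ∈ Dset k V e → Q ∈ Dset k V e → P + Q ∈ Dset k V e) ∧
    (∀ (c : k) P, P ∈ Dset k V e → c • P ∈ Dset k V e) ∧
    (∀ P Q, P ∈ Dset k V e → Q ∈ Dset k V e → bracketOp k P Q ∈ Dset k V e) ∧
    Jset k e₁ e₂ ⊆ Dset k V e ∧
    (∀ P Q, P ∈ Dset k V e → Q ∈ Jset k e₁ e₂ → bracketOp k P Q ∈ Jset k e₁ e₂) := by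
  have h11 : 1 ≤ e₁ := h12.trans h21
  refine ⟨⟨by simp, fun v hv => by simpa using hv⟩, ?_, ?_, ?_, ?_, ?_⟩
  · rintro P Q ⟨hP1, hP2⟩ ⟨hQ1, hQ2⟩
    refine ⟨?_, fun v hv => ?_⟩
    · simp only [Prod.snd_add, eval_add]
      linear_combination hP1 + hQ1
    · have : (P + Q).1 * v + (P + Q).2 * derivative v =
          (P.1 * v + P.2 * derivative v) + (Q.1 * v + Q.2 * derivative v) := by
        simp only [Prod.fst_add, Prod.snd_add]; ring
      rw [this]
      exact V.add_mem (hP2 v hv) (hQ2 v hv)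
  · rintro c P ⟨hP1, hP2⟩
    refine ⟨?_, fun v hv => ?_⟩
    · simp only [Prod.smul_snd, Polynomial.smul_eq_C_mul, eval_mul, eval_C]
      linear_combination c * hP1
    · have : (c • P).1 * v + (c • P).2 * derivative v =
          c • (P.1 * v + P.2 * derivative v) := by
        simp only [Prod.smul_fst, Prod.smul_snd, Polynomial.smul_eq_C_mul]; ring
      rw [this]
      exact V.smul_mem c (hP2 v hv)
  · rintro P Q ⟨hP1, hP2⟩ ⟨hQ1, hQ2⟩
    refine ⟨?_, fun v hv => ?_⟩
    · simp only [bracketOp, eval_sub, eval_mul]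
      linear_combination (derivative Q.2).eval 0 * hP1 - (derivative P.2).eval 0 * hQ1
    · have key : (bracketOp k P Q).1 * v + (bracketOp k P Q).2 * derivative v =
          (P.1 * (Q.1 * v + Q.2 * derivative v) +
            P.2 * derivative (Q.1 * v + Q.2 * derivative v)) -
          (Q.1 * (P.1 * v + P.2 * derivative v) +
            Q.2 * derivative (P.1 * v + P.2 * derivative v)) := by
        simp only [bracketOp, derivative_add, derivative_mul]
        ring
      rw [key]
      exact V.sub_mem (hP2 _ (hQ2 v hv)) (hQ2 _ (hP2 v hv))
  · rintro P ⟨⟨c₀, hA⟩, hB⟩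
    refine ⟨?_, fun v hv => ?_⟩
    · obtain ⟨b, hb⟩ := hB
      rw [hb]
      simp [zero_pow (by omega : e₁ ≠ 0)]
    · have : P.1 * v + P.2 * derivative v =
          c₀ • v + ((P.1 - C c₀) * v + P.2 * derivative v) := by
        rw [Polynomial.smul_eq_C_mul]; ring
      rw [this]
      refine V.add_mem (V.smul_mem c₀ hv) (hV _ (dvd_add (hA.mul_right v) ?_))
      exact (((pow_dvd_pow X h21).trans hB).mul_right _)
  · rintro P Q ⟨hP1, _⟩ ⟨⟨c₀, hA⟩, hB⟩
    obtain ⟨a, ha⟩ := hA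
    obtain ⟨b, hb⟩ := hB
    obtain ⟨u, hu⟩ := aux_X_dvd k hP1 hee₂
    obtain ⟨w, hw⟩ := aux_X_dvd k hP1 hee₁
    constructor
    · refine ⟨0, ?_⟩
      rw [map_zero, sub_zero]
      have hdA : derivative Q.1 = C (e₂ : k) * X ^ (e₂ - 1) * a + X ^ e₂ * derivative a := by
        have : Q.1 = X ^ e₂ * a + C c₀ := by linear_combination ha
        rw [this]
        simp [derivative_mul, derivative_X_pow]
      have h1 : X ^ e₂ ∣ P.2 * derivative Q.1 := by
        rw [hdA, mul_add]
        refine dvd_add ?_ (Dvd.dvd.mul_left (dvd_mul_right _ _) _)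
        have : P.2 * (C (e₂ : k) * X ^ (e₂ - 1) * a) =
            X * u * (X ^ (e₂ - 1) * a) := by rw [← hu]; ring
        rw [this, aux_pow_split k h12]
        exact ⟨u * a, by ring⟩
      have h2 : X ^ e₂ ∣ Q.2 * derivative P.1 :=
        (((pow_dvd_pow X h21).trans ⟨b, hb⟩).mul_right _)
      exact dvd_sub h1 h2
    · have hdB : derivative Q.2 = C (e₁ : k) * X ^ (e₁ - 1) * b + X ^ e₁ * derivative b := by
        rw [hb]
        simp [derivative_mul, derivative_X_pow]
      have h1 : X ^ e₁ ∣ P.2 * derivative Q.2 := by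
        rw [hdB, mul_add]
        refine dvd_add ?_ (Dvd.dvd.mul_left (dvd_mul_right _ _) _)
        have : P.2 * (C (e₁ : k) * X ^ (e₁ - 1) * b) =
            X * w * (X ^ (e₁ - 1) * b) := by rw [← hw]; ring
        rw [this, aux_pow_split k h11]
        exact ⟨w * b, by ring⟩
      have h2 : X ^ e₁ ∣ Q.2 * derivative P.2 := Dvd.dvd.mul_right ⟨b, hb⟩ _
      exact dvd_sub h1 h2

end
end

section
/- Let m ≥ 1 be an integer and V a k-subspace of k[β] with (β^m) ⊆ V, and set d = dim_k V/(β^m). Then dim_k W(V,m) ≥ d² + 2(m − 1) − d·m = (d − 2)(d + 2 − m) + 2. -/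
open Polynomial Matrix

noncomputable section

variable (k : Type*) [Field k]

variable {k}

variable (k)

/-- The space `W(V,m)` of first-order differential operators `A + B·∂/∂β` with
`A(0) = B(0) = 0`, `deg A, deg B ≤ m − 1`, mapping `V` into itself. -/
def Wsub (m : ℕ) (V : Submodule k (Polynomial k)) :
    Submodule k (Polynomial k × Polynomial k) where
  carrier := {P | P.1.coeff 0 = 0 ∧ P.2.coeff 0 = 0 ∧
      P.1.degree ≤ ((m - 1 : ℕ) : WithBot ℕ) ∧ P.2.degree ≤ ((m - 1 : ℕ) : WithBot ℕ) ∧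
      ∀ v ∈ V, P.1 * v + P.2 * derivative v ∈ V}
  zero_mem' := by
    refine ⟨by simp, by simp, by simp, by simp, fun v hv => by simpa using V.zero_mem⟩
  add_mem' := by
    rintro P Q ⟨h1, h2, h3, h4, h5⟩ ⟨g1, g2, g3, g4, g5⟩
    refine ⟨by simp [h1, g1], by simp [h2, g2],
      le_trans (Polynomial.degree_add_le _ _) (max_le h3 g3),
      le_trans (Polynomial.degree_add_le _ _) (max_le h4 g4), fun v hv => ?_⟩
    have : (P + Q).1 * v + (P + Q).2 * derivative v =
        (P.1 * v + P.2 * derivative v) + (Q.1 * v + Q.2 * derivative v) := by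
      simp [add_mul]; ring
    rw [this]
    exact V.add_mem (h5 v hv) (g5 v hv)
  smul_mem' := by
    rintro c P ⟨h1, h2, h3, h4, h5⟩
    refine ⟨by simp [h1], by simp [h2],
      le_trans (Polynomial.degree_smul_le _ _) h3,
      le_trans (Polynomial.degree_smul_le _ _) h4, fun v hv => ?_⟩
    have : (c • P).1 * v + (c • P).2 * derivative v =
        c • (P.1 * v + P.2 * derivative v) := by
      simp [smul_add, smul_mul_assoc]
    rw [this]
    exact V.smul_mem _ (h5 v hv)

namespace Stmt10Aux

variable {k}


lemma deg_lt_iff {m : ℕ} (hm : 1 ≤ m) {p : Polynomial k} :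
    p.degree < (m : ℕ) ↔ p.degree ≤ ((m - 1 : ℕ) : WithBot ℕ) := by
  cases h : p.degree with
  | bot => simp [h, Nat.cast_withBot]
  | coe n =>
    simp only [Nat.cast_withBot, WithBot.coe_lt_coe, WithBot.coe_le_coe]
    exact Nat.lt_iff_le_pred hm

/-- the space of pairs (A,B) with A(0)=B(0)=0 and degrees ≤ m-1 -/
def Usub (k : Type*) [Field k] (m : ℕ) : Submodule k (Polynomial k × Polynomial k) where
  carrier := {P | P.1.coeff 0 = 0 ∧ P.2.coeff 0 = 0 ∧
      P.1.degree ≤ ((m - 1 : ℕ) : WithBot ℕ) ∧ P.2.degree ≤ ((m - 1 : ℕ) : WithBot ℕ)}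
  zero_mem' := ⟨by simp, by simp, by simp, by simp⟩
  add_mem' := by
    rintro P Q ⟨h1, h2, h3, h4⟩ ⟨g1, g2, g3, g4⟩
    exact ⟨by simp [h1, g1], by simp [h2, g2],
      le_trans (Polynomial.degree_add_le _ _) (max_le h3 g3),
      le_trans (Polynomial.degree_add_le _ _) (max_le h4 g4)⟩
  smul_mem' := by
    rintro c P ⟨h1, h2, h3, h4⟩
    exact ⟨by simp [h1], by simp [h2],
      le_trans (Polynomial.degree_smul_le _ _) h3,
      le_trans (Polynomial.degree_smul_le _ _) h4⟩

/-- For fixed (A,B), the map v ↦ A v + B v' from V to k[X]/V. -/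
def phiAux (V : Submodule k (Polynomial k)) (u : Polynomial k × Polynomial k) :
    V →ₗ[k] Polynomial k ⧸ V where
  toFun v := Submodule.Quotient.mk (u.1 * v + u.2 * derivative (v : Polynomial k))
  map_add' v w := by
    rw [← Submodule.Quotient.mk_add]
    congr 1
    simp only [Submodule.coe_add, derivative_add]
    ring
  map_smul' c v := by
    rw [RingHom.id_apply, ← Submodule.Quotient.mk_smul]
    congr 1
    simp only [SetLike.val_smul, derivative_smul]
    rw [smul_add, mul_smul_comm, mul_smul_comm]

lemma phiAux_ker {m : ℕ} (hm : 1 ≤ m) (V : Submodule k (Polynomial k))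
    (hV : ∀ p : Polynomial k, X ^ m ∣ p → p ∈ V)
    (u : Polynomial k × Polynomial k) (hu : u ∈ Usub k m) :
    Submodule.comap V.subtype (Bsub k m) ≤ LinearMap.ker (phiAux V u) := by
  rintro ⟨v, hvV⟩ hv
  obtain ⟨n, rfl⟩ : ∃ n, m = n + 1 := ⟨m - 1, (Nat.succ_pred_eq_of_pos hm).symm⟩
  obtain ⟨w, hw⟩ : (X : Polynomial k) ^ (n + 1) ∣ v := hv
  obtain ⟨b, hb⟩ : (X : Polynomial k) ∣ u.2 := X_dvd_iff.mpr hu.2.1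
  simp only [LinearMap.mem_ker, phiAux, LinearMap.coe_mk, AddHom.coe_mk,
    Submodule.Quotient.mk_eq_zero]
  refine V.add_mem (hV _ (Dvd.dvd.mul_left ⟨w, hw⟩ _)) (hV _ ?_)
  have hder : derivative v = C ((n + 1 : ℕ) : k) * X ^ n * w + X ^ (n + 1) * derivative w := by
    rw [hw, derivative_mul, derivative_X_pow, Nat.add_sub_cancel]
  refine ⟨C ((n + 1 : ℕ) : k) * b * w + X * b * derivative w, ?_⟩
  rw [hder, hb]
  ring

/-- The main linear map from Usub to Hom(V/(X^m), k[X]/V). -/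
def Phi (m : ℕ) (hm : 1 ≤ m) (V : Submodule k (Polynomial k))
    (hV : ∀ p : Polynomial k, X ^ m ∣ p → p ∈ V) :
    Usub k m →ₗ[k]
      ((↥V ⧸ (Submodule.comap V.subtype (Bsub k m))) →ₗ[k] Polynomial k ⧸ V) where
  toFun u := Submodule.liftQ _ (phiAux V u.1) (phiAux_ker hm V hV u.1 u.2)
  map_add' u w := by
    refine LinearMap.ext fun q => ?_
    obtain ⟨v, rfl⟩ := Submodule.Quotient.mk_surjective _ q
    simp only [Submodule.liftQ_apply, LinearMap.add_apply, phiAux, LinearMap.coe_mk,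
      AddHom.coe_mk, Submodule.coe_add, Prod.fst_add, Prod.snd_add,
      ← Submodule.Quotient.mk_add]
    congr 1
    ring
  map_smul' c u := by
    refine LinearMap.ext fun q => ?_
    obtain ⟨v, rfl⟩ := Submodule.Quotient.mk_surjective _ q
    simp only [Submodule.liftQ_apply, RingHom.id_apply, LinearMap.smul_apply, phiAux,
      LinearMap.coe_mk, AddHom.coe_mk, SetLike.val_smul, Prod.smul_fst, Prod.smul_snd,
      ← Submodule.Quotient.mk_smul]
    congr 1
    rw [smul_add, smul_mul_assoc, smul_mul_assoc]




/-- surjection from degreeLT onto k[X]/(X^m) -/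
lemma surj_quot (m : ℕ) :
    Function.Surjective ((Bsub k m).mkQ ∘ₗ (Polynomial.degreeLT k m).subtype) := by
  intro q
  obtain ⟨p, rfl⟩ := Submodule.Quotient.mk_surjective _ q
  refine ⟨⟨p %ₘ X ^ m, ?_⟩, ?_⟩
  · rw [Polynomial.mem_degreeLT]
    simpa [Polynomial.degree_X_pow] using degree_modByMonic_lt p (monic_X_pow m)
  · show Submodule.Quotient.mk _ = Submodule.Quotient.mk p
    rw [Submodule.Quotient.eq]
    show (X : Polynomial k) ^ m ∣ p %ₘ X ^ m - p
    have h := modByMonic_add_div p ((X : Polynomial k) ^ m)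
    exact ⟨-(p /ₘ X ^ m), by linear_combination h⟩

instance degLT_findim (m : ℕ) : FiniteDimensional k (Polynomial.degreeLT k m) :=
  Module.Finite.equiv (Polynomial.degreeLTEquiv k m).symm

lemma finrank_degLT (m : ℕ) : Module.finrank k (Polynomial.degreeLT k m) = m := by
  rw [LinearEquiv.finrank_eq (Polynomial.degreeLTEquiv k m)]
  exact Module.finrank_fin_fun k

instance quotB_findim (m : ℕ) : FiniteDimensional k (Polynomial k ⧸ Bsub k m) :=
  Module.Finite.of_surjective _ (surj_quot m)

lemma finrank_quotB_le (m : ℕ) :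
    Module.finrank k (Polynomial k ⧸ Bsub k m) ≤ m := by
  have h1 := LinearMap.finrank_range_le ((Bsub k m).mkQ ∘ₗ (Polynomial.degreeLT k m).subtype)
  rw [LinearMap.range_eq_top.mpr (surj_quot (k := k) m), finrank_top, finrank_degLT] at h1
  exact h1




def fVQ (m : ℕ) (V : Submodule k (Polynomial k)) : ↥V →ₗ[k] Polynomial k ⧸ Bsub k m :=
  (Bsub k m).mkQ ∘ₗ V.subtype

lemma ker_fVQ (m : ℕ) (V : Submodule k (Polynomial k)) :
    LinearMap.ker (fVQ m V) = Submodule.comap V.subtype (Bsub k m) := by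
  rw [fVQ, LinearMap.ker_comp, Submodule.ker_mkQ]

def Qequiv (m : ℕ) (V : Submodule k (Polynomial k)) :
    (↥V ⧸ Submodule.comap V.subtype (Bsub k m)) ≃ₗ[k]
      ↥(LinearMap.range (fVQ m V)) :=
  (Submodule.quotEquivOfEq _ _ (ker_fVQ m V).symm).trans (fVQ m V).quotKerEquivRange

instance Q_findim (m : ℕ) (V : Submodule k (Polynomial k)) :
    FiniteDimensional k (↥V ⧸ Submodule.comap V.subtype (Bsub k m)) :=
  Module.Finite.equiv (Qequiv m V).symm

def Cqequiv (m : ℕ) (V : Submodule k (Polynomial k)) (hBV : Bsub k m ≤ V) :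
    ((Polynomial k ⧸ Bsub k m) ⧸ LinearMap.range (fVQ m V)) ≃ₗ[k] Polynomial k ⧸ V :=
  (Submodule.quotEquivOfEq _ _ (by
      rw [fVQ, LinearMap.range_comp, Submodule.range_subtype])).trans
    (Submodule.quotientQuotientEquivQuotient (Bsub k m) V hBV)

lemma Cq_findim (m : ℕ) (V : Submodule k (Polynomial k)) (hBV : Bsub k m ≤ V) :
    FiniteDimensional k (Polynomial k ⧸ V) :=
  Module.Finite.equiv (Cqequiv m V hBV)

lemma key1 (m : ℕ) (V : Submodule k (Polynomial k)) (hBV : Bsub k m ≤ V) :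
    Module.finrank k (Polynomial k ⧸ V) +
      Module.finrank k (↥V ⧸ Submodule.comap V.subtype (Bsub k m)) ≤ m := by
  have h := Submodule.finrank_quotient_add_finrank (LinearMap.range (fVQ (k := k) m V))
  rw [LinearEquiv.finrank_eq (Cqequiv m V hBV), ← LinearEquiv.finrank_eq (Qequiv m V)] at h
  exact h.le.trans (finrank_quotB_le m)





lemma Xmul_mem {m : ℕ} (p : Polynomial k) (hp : p ∈ degreeLT k (m - 1)) :
    (X * p).coeff 0 = 0 ∧ (X * p).degree ≤ ((m - 1 : ℕ) : WithBot ℕ) := by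
  constructor
  · simp [Polynomial.mul_coeff_zero]
  · rcases eq_or_ne p 0 with rfl | hp0
    · simp
    rcases Nat.eq_zero_or_pos m with rfl | hm
    · exfalso
      rw [Polynomial.mem_degreeLT] at hp
      simp only [Nat.zero_sub, Nat.cast_zero] at hp
      exact hp0 (Polynomial.degree_eq_bot.mp (Nat.WithBot.lt_zero_iff.mp hp))
    · rw [Polynomial.mem_degreeLT] at hp
      rw [← deg_lt_iff hm]
      have hXp : X * p ≠ 0 := mul_ne_zero Polynomial.X_ne_zero hp0
      rw [← Polynomial.natDegree_lt_iff_degree_lt hp0] at hp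
      rw [← Polynomial.natDegree_lt_iff_degree_lt hXp,
        Polynomial.natDegree_mul Polynomial.X_ne_zero hp0, Polynomial.natDegree_X]
      omega

/-- injection (degreeLT (m-1))² → Usub -/
def ULow (m : ℕ) : (↥(degreeLT k (m - 1)) × ↥(degreeLT k (m - 1))) →ₗ[k] ↥(Usub k m) where
  toFun P := ⟨(X * (P.1 : Polynomial k), X * (P.2 : Polynomial k)),
    (Xmul_mem _ P.1.2).1, (Xmul_mem _ P.2.2).1, (Xmul_mem _ P.1.2).2, (Xmul_mem _ P.2.2).2⟩
  map_add' P Q := by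
    apply Subtype.ext
    simp [mul_add, Prod.ext_iff]
  map_smul' c P := by
    apply Subtype.ext
    simp [mul_smul_comm, Prod.ext_iff]

lemma ULow_inj (m : ℕ) : Function.Injective (ULow (k := k) m) := by
  intro P Q h
  rw [Subtype.ext_iff] at h
  simp only [ULow, LinearMap.coe_mk, AddHom.coe_mk, Prod.ext_iff] at h
  have h' := h
  exact Prod.ext (Subtype.ext (mul_left_cancel₀ Polynomial.X_ne_zero h'.1))
    (Subtype.ext (mul_left_cancel₀ Polynomial.X_ne_zero h'.2))

/-- injection Usub → (degreeLT m)² -/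
def UHigh (m : ℕ) (hm : 1 ≤ m) : ↥(Usub k m) →ₗ[k] (↥(degreeLT k m) × ↥(degreeLT k m)) where
  toFun u := ⟨⟨u.1.1, by rw [Polynomial.mem_degreeLT, deg_lt_iff hm]; exact u.2.2.2.1⟩,
    ⟨u.1.2, by rw [Polynomial.mem_degreeLT, deg_lt_iff hm]; exact u.2.2.2.2⟩⟩
  map_add' u v := rfl
  map_smul' c u := rfl

lemma UHigh_inj (m : ℕ) (hm : 1 ≤ m) : Function.Injective (UHigh (k := k) m hm) := by
  rintro ⟨u, hu⟩ ⟨v, hv⟩ h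
  simp only [UHigh, LinearMap.coe_mk, AddHom.coe_mk, Prod.ext_iff, Subtype.ext_iff] at h
  exact Subtype.ext (Prod.ext h.1 h.2)

lemma U_findim (m : ℕ) (hm : 1 ≤ m) : FiniteDimensional k (Usub k m) :=
  FiniteDimensional.of_injective (UHigh m hm) (UHigh_inj m hm)

lemma finrank_U_ge (m : ℕ) (hm : 1 ≤ m) :
    2 * (m - 1) ≤ Module.finrank k (Usub k m) := by
  have := U_findim (k := k) m hm
  have h := LinearMap.finrank_le_finrank_of_injective (ULow_inj (k := k) m)
  rw [Module.finrank_prod, finrank_degLT] at h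
  omega





lemma Wsub_eq (m : ℕ) (hm : 1 ≤ m) (V : Submodule k (Polynomial k))
    (hV : ∀ p : Polynomial k, X ^ m ∣ p → p ∈ V) :
    Wsub k m V = (LinearMap.ker (Phi m hm V hV)).map (Usub k m).subtype := by
  ext x
  simp only [Submodule.mem_map, LinearMap.mem_ker, Submodule.coe_subtype]
  constructor
  · rintro ⟨h1, h2, h3, h4, h5⟩
    refine ⟨⟨x, h1, h2, h3, h4⟩, ?_, rfl⟩
    refine LinearMap.ext fun q => ?_
    obtain ⟨v, rfl⟩ := Submodule.Quotient.mk_surjective _ q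
    simp only [Phi, LinearMap.coe_mk, AddHom.coe_mk, Submodule.liftQ_apply,
      LinearMap.zero_apply, phiAux, Submodule.Quotient.mk_eq_zero]
    exact h5 v v.2
  · rintro ⟨⟨u, hu⟩, hker, rfl⟩
    refine ⟨hu.1, hu.2.1, hu.2.2.1, hu.2.2.2, fun v hv => ?_⟩
    have h := congrArg (fun f => f (Submodule.Quotient.mk ⟨v, hv⟩)) hker
    simp only [Phi, LinearMap.coe_mk, AddHom.coe_mk, Submodule.liftQ_apply,
      LinearMap.zero_apply, phiAux, Submodule.Quotient.mk_eq_zero] at h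
    exact h

set_option maxHeartbeats 1000000 in
set_option synthInstance.maxHeartbeats 400000 in
lemma main (m : ℕ) (hm : 1 ≤ m) (V : Submodule k (Polynomial k))
    (hV : ∀ p : Polynomial k, X ^ m ∣ p → p ∈ V) :
    ((Module.finrank k (↥V ⧸ (Submodule.comap V.subtype (Bsub k m))) : ℤ)) ^ 2 +
      2 * ((m : ℤ) - 1) -
      (Module.finrank k (↥V ⧸ (Submodule.comap V.subtype (Bsub k m))) : ℤ) * m ≤
      (Module.finrank k ↥(Wsub k m V) : ℤ) := by
  have hBV : Bsub k m ≤ V := fun p hp => hV p hp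
  haveI := U_findim (k := k) m hm
  haveI := Cq_findim m V hBV
  set d := Module.finrank k (↥V ⧸ (Submodule.comap V.subtype (Bsub k m))) with hd
  set c := Module.finrank k (Polynomial k ⧸ V) with hc
  set f := Phi m hm V hV with hf
  have h6 := LinearMap.finrank_range_add_finrank_ker f
  have h7 : Module.finrank k ↥(Wsub k m V) = Module.finrank k ↥(LinearMap.ker f) := by
    rw [Wsub_eq m hm V hV, Submodule.finrank_map_subtype_eq]
  have h8 : Module.finrank k ↥(LinearMap.range f) ≤ d * c := by
    refine (Submodule.finrank_le _).trans ?_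
    rw [Module.finrank_linearMap]
  have h10 := key1 m V hBV
  have h11 := finrank_U_ge (k := k) m hm
  -- pass to ℤ
  have hcast : ((2 * (m - 1) : ℕ) : ℤ) = 2 * ((m : ℤ) - 1) := by
    have : 1 ≤ m := hm
    push_cast [Nat.cast_sub this]
    ring
  have e6 : (Module.finrank k ↥(LinearMap.range f) : ℤ) +
      (Module.finrank k ↥(LinearMap.ker f) : ℤ) = (Module.finrank k ↥(Usub k m) : ℤ) := by
    exact_mod_cast congrArg (Nat.cast : ℕ → ℤ) h6
  have e8 : (Module.finrank k ↥(LinearMap.range f) : ℤ) ≤ (d : ℤ) * c := by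
    exact_mod_cast h8
  have e10 : (c : ℤ) + d ≤ m := by exact_mod_cast h10
  have e11 : 2 * ((m : ℤ) - 1) ≤ (Module.finrank k ↥(Usub k m) : ℤ) := by
    rw [← hcast]; exact_mod_cast h11
  rw [h7]
  nlinarith [mul_le_mul_of_nonneg_left (show (c : ℤ) ≤ (m : ℤ) - d by linarith)
    (show (0 : ℤ) ≤ d by positivity)]


end Stmt10Aux

/-- `dim W(V,m) ≥ d² + 2(m−1) − dm = (d−2)(d+2−m) + 2`. -/
theorem stmt10 (m : ℕ) (hm : 1 ≤ m) (V : Submodule k (Polynomial k))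
    (hV : ∀ p : Polynomial k, X ^ m ∣ p → p ∈ V)
    (d : ℕ) (hd : d = Module.finrank k
      (↥V ⧸ (Submodule.comap V.subtype (Bsub k m)))) :
    (d : ℤ) ^ 2 + 2 * ((m : ℤ) - 1) - d * m = ((d : ℤ) - 2) * ((d : ℤ) + 2 - m) + 2 ∧
    (d : ℤ) ^ 2 + 2 * ((m : ℤ) - 1) - d * m ≤
      (Module.finrank k ↥(Wsub k m V) : ℤ) := by
  refine ⟨by ring, ?_⟩
  rw [hd]
  exact Stmt10Aux.main m hm V hV

end
end
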